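/- arXiv:1512.06027 — 3 statements merged into one kernel-verified Lean document; each statement's English description precedes it below -/
import Mathlib

section
/- Let $n \in \mathbb{R}^{d+1}$ be a unit vector such that the hyperplane $\Sigma_0 = \{x : x \cdot n = 0\}$ contains no nonzero point of $\mathbb{Z}^{d+1}$ (an 'irrational direction'). Then for every $\rho > 0$ there exists $R_\rho > 0$ such that for every $z \in \Sigma_0$ there exists $\tau \in \Sigma_0$ with $|\tau - z| \leq R_\rho$ and $\mathrm{dist}(\tau, \mathbb{Z}^{d+1}) \leq \rho$. -/
open scoped RealInnerProductSpace

/-- The lattice point of `ℤ^{d+1}` viewed in Euclidean space. -/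
noncomputable def lattPt4 (d : ℕ) (k : Fin (d + 1) → ℤ) : EuclideanSpace ℝ (Fin (d + 1)) :=
  (WithLp.equiv 2 (Fin (d + 1) → ℝ)).symm (fun i => (k i : ℝ))

theorem stmt_4 (d : ℕ) (n : EuclideanSpace ℝ (Fin (d + 1))) (hn : ‖n‖ = 1)
    (hirr : ∀ k : Fin (d + 1) → ℤ, ⟪lattPt4 d k, n⟫ = 0 → k = 0) :
    ∀ ρ > (0 : ℝ), ∃ R > (0 : ℝ), ∀ z : EuclideanSpace ℝ (Fin (d + 1)), ⟪z, n⟫ = 0 →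
      ∃ τ : EuclideanSpace ℝ (Fin (d + 1)), ⟪τ, n⟫ = 0 ∧ dist τ z ≤ R ∧
        ∃ k : Fin (d + 1) → ℤ, dist τ (lattPt4 d k) ≤ ρ := by
  intro ρ hρ
  have happ : ∀ (k : Fin (d+1) → ℤ) (i : Fin (d+1)), lattPt4 d k i = (k i : ℝ) := fun _ _ => rfl
  have hinner : ∀ k : Fin (d+1) → ℤ, ⟪lattPt4 d k, n⟫ = ∑ i, (k i : ℝ) * n i := by
    intro k
    rw [PiLp.inner_apply]
    exact Finset.sum_congr rfl fun i _ => by rw [RCLike.inner_apply, conj_trivial, mul_comm, happ]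
  have hladd : ∀ a b : Fin (d+1) → ℤ, lattPt4 d (a + b) = lattPt4 d a + lattPt4 d b := by
    intro a b
    ext i
    have h1 : (lattPt4 d a + lattPt4 d b) i = lattPt4 d a i + lattPt4 d b i := rfl
    rw [h1, happ, happ, happ, Pi.add_apply]
    push_cast
    ring
  rcases Nat.eq_zero_or_pos d with hd | hd
  · subst hd
    refine ⟨ρ, hρ, ?_⟩
    intro z hz
    have hn0 : n 0 ≠ 0 := by
      intro h
      have : n = 0 := by
        ext i
        have : i = 0 := Fin.ext (by omega)
        subst this
        simpa using h
      rw [this] at hn; simp at hn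
    have hz0 : z = 0 := by
      ext i
      have hi : i = 0 := Fin.ext (by omega)
      rw [PiLp.inner_apply] at hz
      simp only [Fin.sum_univ_succ, Finset.univ_eq_empty, Finset.sum_empty, add_zero,
        RCLike.inner_apply, conj_trivial] at hz
      subst hi
      exact (mul_eq_zero.mp hz).resolve_left hn0
    refine ⟨0, by simp, by simp [hz0, hρ.le], 0, ?_⟩
    have : lattPt4 0 (0 : Fin 1 → ℤ) = 0 := by ext i; simp [happ]
    simp [this, hρ.le]
  · -- main case d ≥ 1
    set S : AddSubgroup ℝ := {
      carrier := Set.range (fun k => ⟪lattPt4 d k, n⟫)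
      zero_mem' := ⟨0, by show ⟪lattPt4 d 0, n⟫ = 0; rw [hinner]; simp⟩
      add_mem' := by
        rintro _ _ ⟨a, rfl⟩ ⟨b, rfl⟩
        exact ⟨a + b, by show ⟪lattPt4 d (a + b), n⟫ = _; rw [hladd, inner_add_left]⟩
      neg_mem' := by
        rintro _ ⟨a, rfl⟩
        refine ⟨-a, ?_⟩
        show ⟪lattPt4 d (-a), n⟫ = _
        have hna : lattPt4 d (-a) = -lattPt4 d a := by
          ext i
          have h1 : (-lattPt4 d a) i = -(lattPt4 d a i) := rfl
          rw [h1, happ, happ, Pi.neg_apply]; push_cast; ring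
        rw [hna, inner_neg_left] } with hS
    have hdense : Dense (S : Set ℝ) := by
      rcases S.dense_or_cyclic with h | ⟨a, ha⟩
      · exact h
      · exfalso
        have hmem : ∀ i, ∃ m : ℤ, m • a = n i := by
          intro i
          have hni : n i ∈ S := by
            refine ⟨Pi.single i 1, ?_⟩
            show ⟪lattPt4 d (Pi.single i 1), n⟫ = n i
            rw [hinner]
            simp [Pi.single_apply, apply_ite (Int.cast : ℤ → ℝ), ite_mul]
          rw [ha, AddSubgroup.mem_closure_singleton] at hni
          exact hni
        choose m hm using hmem
        obtain ⟨i₀, hi₀⟩ : ∃ i, n i ≠ 0 := by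
          by_contra h
          push_neg at h
          have : n = 0 := PiLp.ext h
          rw [this] at hn; simp at hn
        have : Nontrivial (Fin (d+1)) := Fin.nontrivial_iff_two_le.mpr (by omega)
        obtain ⟨j, hj⟩ := exists_ne i₀
        set k : Fin (d+1) → ℤ :=
          fun i => (if i = i₀ then m j else 0) - (if i = j then m i₀ else 0) with hk
        have hfk : ⟪lattPt4 d k, n⟫ = 0 := by
          rw [hinner]
          have hsum : ∑ i, (k i : ℝ) * n i = (m j : ℝ) * n i₀ - (m i₀ : ℝ) * n j := by
            simp only [hk, Int.cast_sub, apply_ite (Int.cast : ℤ → ℝ), Int.cast_zero,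
              sub_mul, ite_mul, zero_mul, Finset.sum_sub_distrib, Finset.sum_ite_eq',
              Finset.mem_univ, if_true]
          rw [hsum, ← hm i₀, ← hm j]
          push_cast [zsmul_eq_mul]
          ring
        have hk0 := hirr k hfk
        have hkj : k j = 0 := by rw [hk0]; rfl
        have : m i₀ = 0 := by
          simp only [hk, if_neg hj, ite_self, zero_sub, if_pos rfl, neg_eq_zero] at hkj
          exact hkj
        rw [← hm i₀, this] at hi₀
        simp at hi₀
    obtain ⟨s, hsS, hs1, hs2⟩ : ∃ s, s ∈ (S : Set ℝ) ∧ 0 < s ∧ s < ρ := by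
      obtain ⟨x, hx, hx2⟩ := hdense.exists_mem_open isOpen_Ioo (Set.nonempty_Ioo.mpr hρ)
      exact ⟨x, hx, hx2.1, hx2.2⟩
    obtain ⟨v, hv0⟩ := hsS
    have hv : ⟪lattPt4 d v, n⟫ = s := hv0
    refine ⟨((d:ℝ)+1) + (((d:ℝ)+1)/s + 1) * ‖lattPt4 d v‖ + ρ, by positivity, ?_⟩
    intro z hz
    set k₀ : Fin (d+1) → ℤ := fun i => ⌊z i⌋ with hk₀
    set t := ⟪lattPt4 d k₀, n⟫ with ht
    have hb : ‖lattPt4 d k₀ - z‖ ≤ (d:ℝ)+1 := by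
      rw [EuclideanSpace.norm_eq]
      have hsum : (∑ i, ‖(lattPt4 d k₀ - z) i‖^2) ≤ (d:ℝ)+1 := by
        calc (∑ i, ‖(lattPt4 d k₀ - z) i‖^2) ≤ ∑ _i : Fin (d+1), (1:ℝ) := by
              apply Finset.sum_le_sum
              intro i _
              have h2 : (lattPt4 d k₀ - z) i = (⌊z i⌋ : ℝ) - z i := rfl
              rw [h2, Real.norm_eq_abs]
              have h3 : |(⌊z i⌋:ℝ) - z i| ≤ 1 := by
                rw [abs_sub_comm, abs_of_nonneg (sub_nonneg.mpr (Int.floor_le _))]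
                have := Int.lt_floor_add_one (z i)
                linarith
              nlinarith [abs_nonneg ((⌊z i⌋:ℝ) - z i)]
          _ = (d:ℝ)+1 := by simp
      have h4 := Real.sqrt_le_sqrt hsum
      have h5 : Real.sqrt ((d:ℝ)+1) ≤ (d:ℝ)+1 := by
        nlinarith [Real.sq_sqrt (show (0:ℝ) ≤ (d:ℝ)+1 by positivity),
          Real.sqrt_nonneg ((d:ℝ)+1)]
      linarith
    have hts : |t| ≤ (d:ℝ)+1 := by
      have heq : t = ⟪lattPt4 d k₀ - z, n⟫ := by
        rw [inner_sub_left, hz, sub_zero]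
      rw [heq]
      calc |⟪lattPt4 d k₀ - z, n⟫| ≤ ‖lattPt4 d k₀ - z‖ * ‖n‖ := abs_real_inner_le_norm _ _
        _ ≤ (d:ℝ)+1 := by rw [hn, mul_one]; exact hb
    set q : ℤ := ⌊-t/s⌋ with hq
    have hc1 : t + (q:ℝ)*s ≤ 0 := by
      have h6 : (q:ℝ) * s ≤ -t := by
        calc (q:ℝ) * s ≤ (-t/s) * s := mul_le_mul_of_nonneg_right (Int.floor_le _) hs1.le
          _ = -t := by field_simp
      linarith
    have hc2 : -s < t + (q:ℝ)*s := by
      have h6 : -t/s < (q:ℝ)+1 := by exact_mod_cast Int.lt_floor_add_one (-t/s)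
      have h7 : -t < ((q:ℝ)+1) * s := (div_lt_iff₀ hs1).mp h6
      nlinarith
    have hcρ : |t + (q:ℝ)*s| ≤ ρ := by
      rw [abs_le]
      constructor <;> nlinarith
    have hqb : |(q:ℝ)| ≤ ((d:ℝ)+1)/s + 1 := by
      have h8 : |(-t/s)| ≤ ((d:ℝ)+1)/s := by
        rw [abs_div, abs_neg, abs_of_pos hs1]
        exact (div_le_div_iff_of_pos_right hs1).mpr hts
      obtain ⟨h8a, h8b⟩ := abs_le.mp h8
      have h9 : (q:ℝ) ≤ -t/s := Int.floor_le _
      have h10 : -t/s < (q:ℝ)+1 := by exact_mod_cast Int.lt_floor_add_one (-t/s)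
      rw [abs_le]
      constructor <;> linarith
    have hksum : lattPt4 d (k₀ + q • v) = lattPt4 d k₀ + (q:ℝ) • lattPt4 d v := by
      ext i
      have h1 : (lattPt4 d k₀ + (q:ℝ) • lattPt4 d v) i
          = lattPt4 d k₀ i + (q:ℝ) * lattPt4 d v i := rfl
      rw [h1, happ, happ, happ]
      have h2 : (k₀ + q • v) i = k₀ i + q * v i := rfl
      rw [h2]
      push_cast
      ring
    set c : ℝ := t + (q:ℝ)*s with hc
    have hik : ⟪lattPt4 d (k₀ + q • v), n⟫ = c := by
      rw [hksum, inner_add_left, real_inner_smul_left, hv, ← ht, hc]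
    refine ⟨lattPt4 d (k₀ + q • v) - c • n, ?_, ?_, k₀ + q • v, ?_⟩
    · rw [inner_sub_left, hik, real_inner_smul_left, real_inner_self_eq_norm_sq, hn]
      ring
    · rw [dist_eq_norm]
      have hsplit : lattPt4 d (k₀ + q • v) - c • n - z
          = (lattPt4 d k₀ - z) + (q:ℝ) • lattPt4 d v + -(c • n) := by
        rw [hksum]; abel
      rw [hsplit]
      have hA := norm_add₃_le (E := EuclideanSpace ℝ (Fin (d+1)))
        (a := lattPt4 d k₀ - z) (b := (q:ℝ) • lattPt4 d v) (c := -(c • n))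
      have hB : ‖(q:ℝ) • lattPt4 d v‖ ≤ (((d:ℝ)+1)/s + 1) * ‖lattPt4 d v‖ := by
        rw [norm_smul, Real.norm_eq_abs]
        exact mul_le_mul_of_nonneg_right hqb (norm_nonneg _)
      have hC : ‖-(c • n)‖ ≤ ρ := by
        rw [norm_neg, norm_smul, hn, mul_one, Real.norm_eq_abs]
        exact hcρ
      linarith
    · rw [dist_eq_norm]
      have hsplit : lattPt4 d (k₀ + q • v) - c • n - lattPt4 d (k₀ + q • v) = -(c • n) := by
        abel
      rw [hsplit, norm_neg, norm_smul, hn, mul_one, Real.norm_eq_abs]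
      exact hcρ
end

section
/- Let $\mathcal{I}$ be an operator on bounded functions of $\Sigma_0$ satisfying the comparison principle and the constant-shift identity $\mathcal{I}(\phi + c, y) = \mathcal{I}(\phi, y) - c f^\varepsilon(y)$ with $\varepsilon c_1 \leq f^\varepsilon \leq \varepsilon c_2$, $0 < c_1 < c_2$. Suppose bounded functions $w_1, w_2$ satisfy $\mathcal{I}(w_1, y) \geq -b_1 + \frac{a_1 f^\varepsilon(y)}{\varepsilon} + g(y)$ and $\mathcal{I}(w_2, y) \leq \frac{a_2 f^\varepsilon(y)}{\varepsilon} + g(y)$ for all $y$, with $b_1 \geq 0$. Then $a_1 - a_2 - b_1 / c_1 \leq \varepsilon \sup_{\Sigma_0} |w_1 - w_2|$. -/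
theorem stmt_7 (d : ℕ) (ε c₁ c₂ a₁ a₂ b₁ S : ℝ) (hε : 0 < ε) (hc₁ : 0 < c₁)
    (hc₁₂ : c₁ < c₂) (hb₁ : 0 ≤ b₁)
    (I : ((EuclideanSpace ℝ (Fin d)) → ℝ) → (EuclideanSpace ℝ (Fin d)) → ℝ)
    (f : EuclideanSpace ℝ (Fin d) → ℝ)
    (hf : ∀ y, ε * c₁ ≤ f y ∧ f y ≤ ε * c₂)
    (hshift : ∀ (φ : EuclideanSpace ℝ (Fin d) → ℝ) (c : ℝ) (y),
      I (fun x => φ x + c) y = I φ y - c * f y)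
    (hcomp : ∀ u v : EuclideanSpace ℝ (Fin d) → ℝ,
      (∃ M, ∀ y, |u y| ≤ M) → (∃ M, ∀ y, |v y| ≤ M) →
      (∀ y, I v y ≤ I u y) → ∀ y, u y ≤ v y)
    (g w₁ w₂ : EuclideanSpace ℝ (Fin d) → ℝ)
    (hgb : ∃ M, ∀ y, |g y| ≤ M)
    (hw₁b : ∃ M, ∀ y, |w₁ y| ≤ M) (hw₂b : ∃ M, ∀ y, |w₂ y| ≤ M)
    (hw₁ : ∀ y, -b₁ + a₁ * f y / ε + g y ≤ I w₁ y)
    (hw₂ : ∀ y, I w₂ y ≤ a₂ * f y / ε + g y)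
    (hS : ∀ y, |w₁ y - w₂ y| ≤ S) :
    a₁ - a₂ - b₁ / c₁ ≤ ε * S := by
  have hc₁' : c₁ ≠ 0 := hc₁.ne'
  have hε' : ε ≠ 0 := hε.ne'
  obtain ⟨c, hc⟩ : ∃ c : ℝ, c = (b₁ / c₁ - (a₁ - a₂)) / ε := ⟨_, rfl⟩
  have hkey : ∀ y, I w₂ y ≤ I (fun x => w₁ x + -c) y := by
    intro y
    rw [hshift]
    have h1 := (hf y).1
    have h2 := hw₁ y
    have h3 := hw₂ y
    have hb : b₁ ≤ f y * (b₁ / (c₁ * ε)) := by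
      have h4 := mul_le_mul_of_nonneg_right h1 (show (0:ℝ) ≤ b₁ / (c₁ * ε) by positivity)
      have h5 : ε * c₁ * (b₁ / (c₁ * ε)) = b₁ := by field_simp
      linarith
    have heq : c * f y = f y * (b₁ / (c₁ * ε)) - (a₁ * f y / ε - a₂ * f y / ε) := by
      rw [hc]; field_simp
    linarith [heq, hb, h2, h3]
  obtain ⟨M, hM⟩ := hw₁b
  have hub : ∃ B, ∀ y, |w₁ y + -c| ≤ B := by
    exact ⟨M + |c|, fun y => (abs_add_le _ _).trans (by
      rw [abs_neg]; exact add_le_add_left (hM y) _)⟩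
  have hle := hcomp (fun x => w₁ x + -c) w₂ hub hw₂b hkey 0
  have hS0 := abs_le.mp (hS 0)
  have hcS : -c ≤ S := by simpa using le_trans (by linarith [hle] : -c ≤ w₂ 0 - w₁ 0) (by linarith [hS0.1])
  have hec : ε * c = b₁ / c₁ - (a₁ - a₂) := by rw [hc]; field_simp
  nlinarith [mul_le_mul_of_nonneg_left hcS hε.le]
end

section
/- Suppose $(w^\varepsilon)_{\varepsilon > 0}$ is a family of functions on $\mathbb{R}^d$ such that: (i) for every $\delta > 0$ there is $R_\delta > 0$ (independent of $\varepsilon$) such that every ball of radius $R_\delta$ contains a $C(\delta + \delta/\varepsilon)$-almost period of $w^\varepsilon$; (ii) the rescaled functions $v^\varepsilon(x) := \varepsilon w^\varepsilon(x/\varepsilon)$ are uniformly bounded and uniformly H\"older: $|v^\varepsilon(x) - v^\varepsilon(y)| \leq C|x - y|^\gamma$ for some $\gamma \in (0,1)$, $C$ independent of $\varepsilon$. Then $\|\varepsilon w^\varepsilon - \varepsilon w^\varepsilon(0)\|_{L^\infty(\mathbb{R}^d)} \to 0$ as $\varepsilon \to 0^+$. -/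
theorem stmt_8 (d : ℕ) (C γ : ℝ) (hC : 0 < C) (hγ : 0 < γ) (hγ1 : γ < 1)
    (w v : ℝ → EuclideanSpace ℝ (Fin d) → ℝ)
    (hv : ∀ ε > (0 : ℝ), ∀ x, v ε x = ε * w ε (ε⁻¹ • x))
    (hap : ∀ δ > (0 : ℝ), ∃ R > (0 : ℝ), ∀ ε > (0 : ℝ),
      ∀ z : EuclideanSpace ℝ (Fin d), ∃ τ : EuclideanSpace ℝ (Fin d),
        dist τ z ≤ R ∧ ∀ x, |w ε (x + τ) - w ε x| ≤ C * (δ + δ / ε))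
    (hbd : ∃ M, ∀ ε > (0 : ℝ), ∀ x, |v ε x| ≤ M)
    (hHol : ∀ ε > (0 : ℝ), ∀ x y, |v ε x - v ε y| ≤ C * dist x y ^ γ) :
    ∀ η > (0 : ℝ), ∃ ε₀ > (0 : ℝ), ∀ ε, 0 < ε → ε < ε₀ →
      ∀ x, |ε * w ε x - ε * w ε 0| ≤ η := by
  intro η hη
  set δ := η / (4 * C) with hδdef
  have hδ : 0 < δ := by positivity
  obtain ⟨R, hR, hRap⟩ := hap δ hδ
  have hRγ : (0:ℝ) < R ^ γ := Real.rpow_pos_of_pos hR γ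
  set a := (η / (2 * C * R ^ γ)) ^ (1/γ) with hadef
  have ha : 0 < a := Real.rpow_pos_of_pos (by positivity) _
  refine ⟨min 1 a, lt_min one_pos ha, ?_⟩
  intro ε hε hεlt x
  have hε1 : ε < 1 := lt_of_lt_of_le hεlt (min_le_left _ _)
  have hεa : ε ≤ a := le_of_lt (lt_of_lt_of_le hεlt (min_le_right _ _))
  obtain ⟨τ, hτ, hper⟩ := hRap ε hε x
  have h1 : |w ε x - w ε (x - τ)| ≤ C * (δ + δ / ε) := by
    have := hper (x - τ)
    simpa using this
  have h2 : |ε * w ε (x - τ) - ε * w ε 0| ≤ C * (ε * R) ^ γ := by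
    have e1 : v ε (ε • (x - τ)) = ε * w ε (x - τ) := by
      rw [hv ε hε]
      congr 1
      rw [smul_smul, inv_mul_cancel₀ hε.ne', one_smul]
    have e2 : v ε 0 = ε * w ε 0 := by
      rw [hv ε hε]; simp
    have hd : dist (ε • (x - τ)) (0 : EuclideanSpace ℝ (Fin d)) ≤ ε * R := by
      rw [dist_zero_right, norm_smul, Real.norm_eq_abs, abs_of_pos hε]
      have hn : ‖x - τ‖ ≤ R := by
        rw [← dist_eq_norm, dist_comm]; exact hτ
      exact mul_le_mul_of_nonneg_left hn hε.le
    have := hHol ε hε (ε • (x - τ)) 0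
    rw [e1, e2] at this
    refine this.trans ?_
    gcongr
  have key : |ε * w ε x - ε * w ε 0| ≤ ε * (C * (δ + δ / ε)) + C * (ε * R) ^ γ := by
    have : ε * w ε x - ε * w ε 0 =
        ε * (w ε x - w ε (x - τ)) + (ε * w ε (x - τ) - ε * w ε 0) := by ring
    rw [this]
    refine (abs_add_le _ _).trans ?_
    gcongr ?_ + ?_
    · rw [abs_mul, abs_of_pos hε]
      exact mul_le_mul_of_nonneg_left h1 hε.le
  refine key.trans ?_
  have hb1 : ε * (C * (δ + δ / ε)) ≤ η / 2 := by
    have : ε * (C * (δ + δ / ε)) = C * (ε * δ + δ) := by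
      field_simp
    rw [this]
    have h3 : ε * δ ≤ δ := by nlinarith
    have : C * (ε * δ + δ) ≤ C * (2 * δ) := by nlinarith
    refine this.trans (le_of_eq ?_)
    rw [hδdef]; field_simp; ring
  have hb2 : C * (ε * R) ^ γ ≤ η / 2 := by
    have hmul : (ε * R) ^ γ = ε ^ γ * R ^ γ := Real.mul_rpow hε.le hR.le
    have hεγ : ε ^ γ ≤ η / (2 * C * R ^ γ) := by
      calc ε ^ γ ≤ a ^ γ := Real.rpow_le_rpow hε.le hεa hγ.le
        _ = η / (2 * C * R ^ γ) := by
            rw [hadef, ← Real.rpow_mul (by positivity), one_div_mul_cancel hγ.ne',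
              Real.rpow_one]
    rw [hmul]
    calc C * (ε ^ γ * R ^ γ) ≤ C * (η / (2 * C * R ^ γ) * R ^ γ) := by
          have : ε ^ γ * R ^ γ ≤ η / (2 * C * R ^ γ) * R ^ γ :=
            mul_le_mul_of_nonneg_right hεγ hRγ.le
          exact mul_le_mul_of_nonneg_left this hC.le
      _ = η / 2 := by field_simp
  linarith
end
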